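/- Let R be a commutative ring and A a Hopf algebra over R with antipode S. Then the coshear map of A, the R-linear endomorphism of A ⊗[R] A determined by a ⊗ b ↦ Σ a₍₁₎·b ⊗ a₍₂₎, is bijective if and only if S : A → A is bijective. -/

import Mathlib

open TensorProduct

variable (R A : Type*) [CommRing R] [Ring A] [HopfAlgebra R A]

/-- The coshear map of a bialgebra `A` over `R`: the `R`-linear endomorphism of `A ⊗[R] A`
determined by `a ⊗ b ↦ Σ a₍₁₎·b ⊗ a₍₂₎`. -/
noncomputable def coshearMap : A ⊗[R] A →ₗ[R] A ⊗[R] A :=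
  (LinearMap.mul' R A).rTensor A ∘ₗ (TensorProduct.assoc R A A A).symm.toLinearMap ∘ₗ
    ((TensorProduct.comm R A A).toLinearMap.lTensor A) ∘ₗ
    (TensorProduct.assoc R A A A).toLinearMap ∘ₗ
    (Coalgebra.comul (R := R) (A := A)).rTensor A

namespace CoshearAux

open Coalgebra HopfAlgebra LinearMap

variable {R A}

noncomputable abbrev S : A →ₗ[R] A := HopfAlgebra.antipode R

/-- `ψ (a ⊗ b) = Σ a₍₁₎ ⊗ a₍₂₎ b`. -/
noncomputable def ψ : A ⊗[R] A →ₗ[R] A ⊗[R] A :=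
  mul' R (A ⊗[R] A) ∘ₗ map comul (TensorProduct.mk R A A 1)

/-- `ψ' (a ⊗ b) = Σ a₍₁₎ ⊗ S a₍₂₎ b`. -/
noncomputable def ψ' : A ⊗[R] A →ₗ[R] A ⊗[R] A :=
  mul' R (A ⊗[R] A) ∘ₗ map (S.lTensor A ∘ₗ comul) (TensorProduct.mk R A A 1)

/-- `φ (a ⊗ b) = Σ a b₍₁₎ ⊗ b₍₂₎`. -/
noncomputable def φ : A ⊗[R] A →ₗ[R] A ⊗[R] A :=
  mul' R (A ⊗[R] A) ∘ₗ map ((TensorProduct.mk R A A).flip 1) comul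

/-- `φ' (a ⊗ b) = Σ a S(b₍₁₎) ⊗ b₍₂₎`. -/
noncomputable def φ' : A ⊗[R] A →ₗ[R] A ⊗[R] A :=
  mul' R (A ⊗[R] A) ∘ₗ map ((TensorProduct.mk R A A).flip 1) (S.rTensor A ∘ₗ comul)

@[simp] lemma ψ_tmul (a b : A) :
    ψ (a ⊗ₜ[R] b) = comul a * ((1 : A) ⊗ₜ[R] b) := by
  simp [ψ]

@[simp] lemma ψ'_tmul (a b : A) :
    ψ' (a ⊗ₜ[R] b) = S.lTensor A (comul a) * ((1 : A) ⊗ₜ[R] b) := by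
  simp [ψ']

@[simp] lemma φ_tmul (a b : A) :
    φ (a ⊗ₜ[R] b) = (a ⊗ₜ[R] (1 : A)) * comul b := by
  simp [φ]

@[simp] lemma φ'_tmul (a b : A) :
    φ' (a ⊗ₜ[R] b) = (a ⊗ₜ[R] (1 : A)) * S.rTensor A (comul b) := by
  simp [φ']

lemma ψ_mul_right (z : A ⊗[R] A) (c : A) :
    ψ (z * ((1 : A) ⊗ₜ[R] c)) = ψ z * ((1 : A) ⊗ₜ[R] c) := by
  induction z using TensorProduct.induction_on with
  | zero => simp
  | tmul x y => simp [Algebra.TensorProduct.tmul_mul_tmul, mul_assoc]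
  | add u v hu hv => simp [add_mul, hu, hv]

lemma ψ'_mul_right (z : A ⊗[R] A) (c : A) :
    ψ' (z * ((1 : A) ⊗ₜ[R] c)) = ψ' z * ((1 : A) ⊗ₜ[R] c) := by
  induction z using TensorProduct.induction_on with
  | zero => simp
  | tmul x y => simp [Algebra.TensorProduct.tmul_mul_tmul, mul_assoc]
  | add u v hu hv => simp [add_mul, hu, hv]

lemma φ_mul_left (z : A ⊗[R] A) (c : A) :
    φ ((c ⊗ₜ[R] (1 : A)) * z) = (c ⊗ₜ[R] (1 : A)) * φ z := by
  induction z using TensorProduct.induction_on with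
  | zero => simp
  | tmul x y => simp [Algebra.TensorProduct.tmul_mul_tmul, ← mul_assoc]
  | add u v hu hv => simp [mul_add, hu, hv]

lemma φ'_mul_left (z : A ⊗[R] A) (c : A) :
    φ' ((c ⊗ₜ[R] (1 : A)) * z) = (c ⊗ₜ[R] (1 : A)) * φ' z := by
  induction z using TensorProduct.induction_on with
  | zero => simp
  | tmul x y => simp [Algebra.TensorProduct.tmul_mul_tmul, ← mul_assoc]
  | add u v hu hv => simp [mul_add, hu, hv]

lemma ψ_mul_left (z : A ⊗[R] A) (c : A) :
    ψ ((c ⊗ₜ[R] (1 : A)) * z) = comul c * ψ z := by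
  induction z using TensorProduct.induction_on with
  | zero => simp
  | tmul x y => simp [Algebra.TensorProduct.tmul_mul_tmul, mul_assoc]
  | add u v hu hv => simp [mul_add, hu, hv]

lemma lTensorS_mul_left (z : A ⊗[R] A) (c : A) :
    S.lTensor A ((c ⊗ₜ[R] (1 : A)) * z) = (c ⊗ₜ[R] (1 : A)) * S.lTensor A z := by
  induction z using TensorProduct.induction_on with
  | zero => simp
  | tmul x y => simp [Algebra.TensorProduct.tmul_mul_tmul]
  | add u v hu hv => simp [mul_add, hu, hv]

lemma ψ'_comul (a : A) : ψ' (comul (R := R) a) = a ⊗ₜ[R] (1 : A) := by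
  have h1 : ∀ t : A ⊗[R] A, ψ' t =
      (mul' R A ∘ₗ S.rTensor A).lTensor A
        ((TensorProduct.assoc R A A A) ((comul (R := R) (A := A)).rTensor A t)) := by
    intro t
    induction t using TensorProduct.induction_on with
    | zero => simp
    | tmul x y =>
        simp only [ψ'_tmul, rTensor_tmul]
        generalize comul (R := R) x = s
        induction s using TensorProduct.induction_on with
        | zero => simp
        | tmul p q => simp [Algebra.TensorProduct.tmul_mul_tmul]
        | add u v hu hv => simp [add_mul, hu, hv, add_tmul]
    | add u v hu hv => simp [hu, hv]
  rw [h1, coassoc_apply, ← lTensor_comp_apply, comp_assoc,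
    mul_antipode_rTensor_comul, lTensor_comp_apply, lTensor_counit_comul]
  simp

lemma ψ_lTensorS_comul (b : A) :
    ψ (S.lTensor A (comul (R := R) b)) = b ⊗ₜ[R] (1 : A) := by
  have h1 : ∀ t : A ⊗[R] A, ψ (S.lTensor A t) =
      (mul' R A ∘ₗ S.lTensor A).lTensor A
        ((TensorProduct.assoc R A A A) ((comul (R := R) (A := A)).rTensor A t)) := by
    intro t
    induction t using TensorProduct.induction_on with
    | zero => simp
    | tmul x y =>
        simp only [lTensor_tmul, ψ_tmul, rTensor_tmul]
        generalize comul (R := R) x = s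
        induction s using TensorProduct.induction_on with
        | zero => simp
        | tmul p q => simp [Algebra.TensorProduct.tmul_mul_tmul]
        | add u v hu hv => simp [add_mul, hu, hv, add_tmul]
    | add u v hu hv => simp [hu, hv]
  rw [h1, coassoc_apply, ← lTensor_comp_apply, comp_assoc,
    mul_antipode_lTensor_comul, lTensor_comp_apply, lTensor_counit_comul]
  simp

lemma φ'_comul (b : A) : φ' (comul (R := R) b) = (1 : A) ⊗ₜ[R] b := by
  have h1 : ∀ t : A ⊗[R] A, φ' t =
      (mul' R A ∘ₗ S.lTensor A).rTensor A
        ((TensorProduct.assoc R A A A).symm ((comul (R := R) (A := A)).lTensor A t)) := by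
    intro t
    induction t using TensorProduct.induction_on with
    | zero => simp
    | tmul x y =>
        simp only [φ'_tmul, lTensor_tmul]
        generalize comul (R := R) y = s
        induction s using TensorProduct.induction_on with
        | zero => simp
        | tmul p q => simp [Algebra.TensorProduct.tmul_mul_tmul]
        | add u v hu hv => simp [mul_add, hu, hv, tmul_add]
    | add u v hu hv => simp [hu, hv]
  rw [h1, coassoc_symm_apply, ← rTensor_comp_apply, comp_assoc,
    mul_antipode_lTensor_comul, rTensor_comp_apply, rTensor_counit_comul]
  simp

lemma φ_rTensorS_comul (b : A) :
    φ (S.rTensor A (comul (R := R) b)) = (1 : A) ⊗ₜ[R] b := by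
  have h1 : ∀ t : A ⊗[R] A, φ (S.rTensor A t) =
      (mul' R A ∘ₗ S.rTensor A).rTensor A
        ((TensorProduct.assoc R A A A).symm ((comul (R := R) (A := A)).lTensor A t)) := by
    intro t
    induction t using TensorProduct.induction_on with
    | zero => simp
    | tmul x y =>
        simp only [rTensor_tmul, φ_tmul, lTensor_tmul]
        generalize comul (R := R) y = s
        induction s using TensorProduct.induction_on with
        | zero => simp
        | tmul p q => simp [Algebra.TensorProduct.tmul_mul_tmul]
        | add u v hu hv => simp [mul_add, hu, hv, tmul_add]
    | add u v hu hv => simp [hu, hv]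
  rw [h1, coassoc_symm_apply, ← rTensor_comp_apply, comp_assoc,
    mul_antipode_rTensor_comul, rTensor_comp_apply, rTensor_counit_comul]
  simp

lemma ψ'_ψ (x : A ⊗[R] A) : ψ' (ψ x) = x := by
  induction x using TensorProduct.induction_on with
  | zero => simp
  | tmul a b =>
      rw [ψ_tmul, ψ'_mul_right, ψ'_comul, Algebra.TensorProduct.tmul_mul_tmul,
        mul_one, one_mul]
  | add u v hu hv => simp [hu, hv]

lemma ψ_ψ' (x : A ⊗[R] A) : ψ (ψ' x) = x := by
  induction x using TensorProduct.induction_on with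
  | zero => simp
  | tmul a b =>
      rw [ψ'_tmul, ψ_mul_right, ψ_lTensorS_comul, Algebra.TensorProduct.tmul_mul_tmul,
        mul_one, one_mul]
  | add u v hu hv => simp [hu, hv]

lemma φ'_φ (x : A ⊗[R] A) : φ' (φ x) = x := by
  induction x using TensorProduct.induction_on with
  | zero => simp
  | tmul a b =>
      rw [φ_tmul, φ'_mul_left, φ'_comul, Algebra.TensorProduct.tmul_mul_tmul,
        mul_one, one_mul]
  | add u v hu hv => simp [hu, hv]

lemma φ_φ' (x : A ⊗[R] A) : φ (φ' x) = x := by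
  induction x using TensorProduct.induction_on with
  | zero => simp
  | tmul a b =>
      rw [φ'_tmul, φ_mul_left, φ_rTensorS_comul, Algebra.TensorProduct.tmul_mul_tmul,
        mul_one, one_mul]
  | add u v hu hv => simp [hu, hv]

lemma bijective_ψ : Function.Bijective (ψ (R := R) (A := A)) :=
  Function.bijective_iff_has_inverse.2 ⟨ψ', ψ'_ψ, ψ_ψ'⟩

lemma bijective_φ : Function.Bijective (φ (R := R) (A := A)) :=
  Function.bijective_iff_has_inverse.2 ⟨φ', φ'_φ, φ_φ'⟩

set_option synthInstance.maxHeartbeats 400000 in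
lemma coshearMap_tmul (a b : A) :
    coshearMap R A (a ⊗ₜ[R] b) = comul a * (b ⊗ₜ[R] (1 : A)) := by
  simp only [coshearMap, coe_comp, Function.comp_apply, LinearEquiv.coe_coe,
    rTensor_tmul]
  generalize comul (R := R) a = s
  induction s using TensorProduct.induction_on with
  | zero => simp
  | tmul p q => simp [Algebra.TensorProduct.tmul_mul_tmul]
  | add u v hu hv => simp [add_mul, hu, hv, add_tmul]

lemma coshearMap_eq (x : A ⊗[R] A) :
    coshearMap R A x = ψ (S.lTensor A (φ x)) := by
  induction x using TensorProduct.induction_on with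
  | zero => simp
  | tmul a b =>
      rw [coshearMap_tmul, φ_tmul, lTensorS_mul_left, ψ_mul_left, ψ_lTensorS_comul]
  | add u v hu hv => simp [hu, hv]

/-- The linear map `x ⊗ y ↦ ε(x) • y`. -/
noncomputable def ρ : A ⊗[R] A →ₗ[R] A :=
  TensorProduct.lift ((LinearMap.lsmul R A) ∘ₗ counit)

@[simp] lemma ρ_tmul (x y : A) : ρ (x ⊗ₜ[R] y) = counit (R := R) x • y := by
  simp [ρ]

lemma ρ_lTensorS (z : A ⊗[R] A) :
    ρ ((S (R := R) (A := A)).lTensor A z) = S (R := R) (A := A) (ρ z) := by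
  induction z using TensorProduct.induction_on with
  | zero => simp
  | tmul x y => simp
  | add u v hu hv => simp [hu, hv]

lemma bijective_lTensorS_iff :
    Function.Bijective (LinearMap.lTensor A (HopfAlgebra.antipode (R := R) (A := A))) ↔
      Function.Bijective (HopfAlgebra.antipode (R := R) (A := A)) := by
  constructor
  · intro h
    constructor
    · intro a a' haa
      have h2 : S.lTensor A ((1 : A) ⊗ₜ[R] a) = S.lTensor A ((1 : A) ⊗ₜ[R] a') := by
        simp only [lTensor_tmul]
        rw [show HopfAlgebra.antipode (R := R) a = HopfAlgebra.antipode (R := R) a' from haa]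
      have h3 := h.1 h2
      have := congrArg ρ h3
      simpa using this
    · intro a
      obtain ⟨w, hw⟩ := h.2 ((1 : A) ⊗ₜ[R] a)
      refine ⟨ρ w, ?_⟩
      have := congrArg ρ hw
      rw [ρ_lTensorS] at this
      simpa using this
  · intro h
    let e := LinearEquiv.ofBijective _ h
    have h1 : ∀ z : A ⊗[R] A, S.lTensor A ((e.symm.toLinearMap).lTensor A z) = z := by
      intro z
      rw [← lTensor_comp_apply]
      have : S ∘ₗ e.symm.toLinearMap = LinearMap.id := by
        ext x
        exact e.apply_symm_apply x
      rw [this, lTensor_id, id_apply]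
    have h2 : ∀ z : A ⊗[R] A, (e.symm.toLinearMap).lTensor A (S.lTensor A z) = z := by
      intro z
      rw [← lTensor_comp_apply]
      have : e.symm.toLinearMap ∘ₗ S = LinearMap.id := by
        ext x
        exact e.symm_apply_apply x
      rw [this, lTensor_id, id_apply]
    exact Function.bijective_iff_has_inverse.2 ⟨_, h2, h1⟩

end CoshearAux

/-- For a Hopf algebra `A` over a commutative ring `R` with antipode `S`, the coshear map
`a ⊗ b ↦ Σ a₍₁₎·b ⊗ a₍₂₎` is bijective if and only if `S : A → A` is bijective. -/
theorem bijective_coshearMap_iff_bijective_antipode :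
    Function.Bijective (coshearMap R A) ↔
      Function.Bijective (HopfAlgebra.antipode (R := R) (A := A)) := by
  open CoshearAux in
  have hfun : ⇑(coshearMap R A) =
      ⇑(ψ (R := R) (A := A)) ∘ ⇑((S (R := R) (A := A)).lTensor A) ∘ ⇑φ :=
    funext coshearMap_eq
  rw [hfun, Function.Bijective.of_comp_iff' CoshearAux.bijective_ψ,
    Function.Bijective.of_comp_iff _ CoshearAux.bijective_φ,
    CoshearAux.bijective_lTensorS_iff]
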